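/- Define φ : ℝ³ → ℝ³ by φ(u,v,x) = ( u, v + (1/2)·x²·cos(u)·sin(u), x·sin(u) ). For a point q = (u,v,x) ∈ ℝ³ define the Brinkmann quadratic form B_q and the Rosen quadratic form R_q on tangent vectors (a,b,c) ∈ ℝ³ by B_{(u,v,x)}(a,b,c) = 2ab + x²·a² − c² and R_{(u,v,x)}(a,b,c) = 2ab − sin(u)²·c². Then φ is an isometric pullback: for every q = (u,v,x) ∈ ℝ³ and every (a,b,c) ∈ ℝ³, B_{φ(q)}( Dφ(q)(a,b,c) ) = R_q(a,b,c), where Dφ(q) is the (Fréchet) derivative of φ at q. -/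

import Mathlib

/-- The coordinate change `φ(u,v,x) = (u, v + (1/2)x² cos u sin u, x sin u)` from the
singular Rosen metric `2 du dv − sin²u dx²` to the Brinkmann metric `2 du dv + x²du² − dx²`. -/
noncomputable def rosenToBrinkmann : ℝ × ℝ × ℝ → ℝ × ℝ × ℝ :=
  fun q => (q.1, q.2.1 + (1/2) * q.2.2 ^ 2 * Real.cos q.1 * Real.sin q.1,
    q.2.2 * Real.sin q.1)

/-- The quadratic form of the Brinkmann plane-wave metric `2 du dv + x² du² − dx²` at the
point `q`, evaluated on the tangent vector `(a,b,c)`. -/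
def brinkmannForm (q w : ℝ × ℝ × ℝ) : ℝ :=
  2 * w.1 * w.2.1 + q.2.2 ^ 2 * w.1 ^ 2 - w.2.2 ^ 2

/-- The quadratic form of the singular Rosen metric `2 du dv − sin²u dx²` at the point `q`,
evaluated on the tangent vector `(a,b,c)`. -/
noncomputable def rosenForm (q w : ℝ × ℝ × ℝ) : ℝ :=
  2 * w.1 * w.2.1 - Real.sin q.1 ^ 2 * w.2.2 ^ 2

/-- the map `φ(u,v,x) = (u, v + (1/2)x² cos u sin u, x sin u)` pulls the
Brinkmann quadratic form back to the singular Rosen quadratic form: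
`B_{φ(q)}(Dφ(q)w) = R_q(w)` for all `q, w ∈ ℝ³`. -/
theorem rosen_to_brinkmann_isometric_pullback (q w : ℝ × ℝ × ℝ) :
    brinkmannForm (rosenToBrinkmann q) (fderiv ℝ rosenToBrinkmann q w) = rosenForm q w := by
  have h1 : HasFDerivAt (fun p : ℝ × ℝ × ℝ => p.1)
      (ContinuousLinearMap.fst ℝ ℝ (ℝ × ℝ)) q := hasFDerivAt_fst
  have h2 : HasFDerivAt (fun p : ℝ × ℝ × ℝ => p.2.1)
      ((ContinuousLinearMap.fst ℝ ℝ ℝ).comp (ContinuousLinearMap.snd ℝ ℝ (ℝ × ℝ))) q :=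
    hasFDerivAt_fst.comp q hasFDerivAt_snd
  have h3 : HasFDerivAt (fun p : ℝ × ℝ × ℝ => p.2.2)
      ((ContinuousLinearMap.snd ℝ ℝ ℝ).comp (ContinuousLinearMap.snd ℝ ℝ (ℝ × ℝ))) q :=
    hasFDerivAt_snd.comp q hasFDerivAt_snd
  have hc := (Real.hasDerivAt_cos q.1).comp_hasFDerivAt q h1
  have hs := (Real.hasDerivAt_sin q.1).comp_hasFDerivAt q h1
  have hpow : HasFDerivAt (fun p : ℝ × ℝ × ℝ => p.2.2 ^ 2)
      ((2 * q.2.2) • ((ContinuousLinearMap.snd ℝ ℝ ℝ).comp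
        (ContinuousLinearMap.snd ℝ ℝ (ℝ × ℝ)))) q := by
    simpa [← pow_two, two_mul, add_smul, Pi.pow_def] using h3.mul h3
  have hb := h2.add (((hpow.const_mul ((1:ℝ)/2)).mul hc).mul hs)
  have h3' := h3.mul hs
  have hd := h1.prodMk (hb.prodMk h3')
  rw [HasFDerivAt.fderiv (f := rosenToBrinkmann) hd]
  simp only [ContinuousLinearMap.prod_apply, ContinuousLinearMap.add_apply,
    ContinuousLinearMap.smul_apply, ContinuousLinearMap.coe_comp', Function.comp_apply,
    ContinuousLinearMap.coe_fst', ContinuousLinearMap.coe_snd', smul_eq_mul,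
    brinkmannForm, rosenForm, rosenToBrinkmann, Pi.mul_apply]
  have := Real.sin_sq_add_cos_sq q.1
  nlinarith [this, sq_nonneg w.1, sq_nonneg w.2.2]
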